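/- For every ℝ-linear functional z : X_ℝ → ℝ, the function X → ℝ, x ↦ D_ℓ(x) + z(x), attains its minimum: there exists a ∈ X such that D_ℓ(a) + z(a) ≤ D_ℓ(x) + z(x) for all x ∈ X. -/

import Mathlib

open scoped BigOperators Pointwise

namespace NFC

/-- The coordinatewise embedding of the lattice `X = ℤ^g` into `X_ℝ = ℝ^g`. -/
def iota {g : ℕ} (x : Fin g → ℤ) : Fin g → ℝ := fun i => (x i : ℝ)

/-- The ℝ-linear extension of an integral linear functional `u ∈ X^∨` to `X_ℝ`. -/
noncomputable def extd {g : ℕ} (u : (Fin g → ℤ) →ₗ[ℤ] ℤ) (x : Fin g → ℝ) : ℝ :=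
  ∑ i, (u (Pi.single i 1) : ℝ) * x i

/-- `E_ℓ(u) = ℓ · u(φ(u))`. -/
def El {g : ℕ} {Y : Submodule ℤ (Fin g → ℤ)}
    (φ : ((Fin g → ℤ) →ₗ[ℤ] ℤ) → Y) (ℓ : ℕ) (u : (Fin g → ℤ) →ₗ[ℤ] ℤ) : ℤ :=
  (ℓ : ℤ) * u (φ u : Fin g → ℤ)

/-- `Σ_ℓ = {α ∈ X : E_ℓ(u) + u(α) ≥ 0 for all u ∈ X^∨}`. -/
def SigmaL {g : ℕ} {Y : Submodule ℤ (Fin g → ℤ)}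
    (φ : ((Fin g → ℤ) →ₗ[ℤ] ℤ) → Y) (ℓ : ℕ) : Set (Fin g → ℤ) :=
  {α | ∀ u : (Fin g → ℤ) →ₗ[ℤ] ℤ, 0 ≤ El φ ℓ u + u α}

/-- The Voronoi polytope `Σ_ℓ(c)`, defined w.r.t. the norm `‖z‖ = √(B̄(z,z))`. -/
noncomputable def VorP {g : ℕ} {Y : Submodule ℤ (Fin g → ℤ)}
    (Bb : (Fin g → ℝ) →ₗ[ℝ] (Fin g → ℝ) →ₗ[ℝ] ℝ)
    (φ : ((Fin g → ℤ) →ₗ[ℤ] ℤ) → Y) (ℓ : ℕ)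
    (c : (Fin g → ℤ) →ₗ[ℤ] ℤ) : Set (Fin g → ℝ) :=
  {x | ∀ u : (Fin g → ℤ) →ₗ[ℤ] ℤ,
    Real.sqrt (Bb (x - iota ((2 * (ℓ : ℤ)) • ((φ c : Fin g → ℤ))))
               (x - iota ((2 * (ℓ : ℤ)) • ((φ c : Fin g → ℤ))))) ≤
    Real.sqrt (Bb (x - iota ((2 * (ℓ : ℤ)) • ((φ u : Fin g → ℤ))))
               (x - iota ((2 * (ℓ : ℤ)) • ((φ u : Fin g → ℤ)))))}

/-- A subset `Δ ⊆ X_ℝ` is integral: a bounded convex polytope equal to the convex hull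
of `Δ ∩ X`, symmetric about `0`, containing `0`, with `Δ ∩ X` containing a ℤ-basis. -/
def IsIntegral {g : ℕ} (Δ : Set (Fin g → ℝ)) : Prop :=
  Bornology.IsBounded Δ ∧
  Δ = convexHull ℝ (Δ ∩ Set.range (iota (g := g))) ∧
  Δ = -Δ ∧ (0 : Fin g → ℝ) ∈ Δ ∧
  ∃ b : Module.Basis (Fin g) ℤ (Fin g → ℤ), ∀ i, iota (b i) ∈ Δ

/-- `Σ_ℓ^α = (α + 2ℓφ(X^∨)) ∩ Σ_ℓ`. -/
def SigmaAlpha {g : ℕ} {Y : Submodule ℤ (Fin g → ℤ)}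
    (φ : ((Fin g → ℤ) →ₗ[ℤ] ℤ) → Y) (ℓ : ℕ) (α : Fin g → ℤ) : Set (Fin g → ℤ) :=
  {β | β ∈ SigmaL φ ℓ ∧ ∃ u : (Fin g → ℤ) →ₗ[ℤ] ℤ, β = α + (2 * (ℓ : ℤ)) • ((φ u : Fin g → ℤ))}

/-- The convex cone generated by a set `S` (the set of all nonnegative combinations). -/
def conicHull {M : Type*} [AddCommMonoid M] [Module ℝ M] (S : Set M) : Set M :=
  {y | ∃ (n : ℕ) (c : Fin n → ℝ) (v : Fin n → M),
    (∀ i, 0 ≤ c i) ∧ (∀ i, v i ∈ S) ∧ y = ∑ i, c i • v i}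

/-- `Cone(C_ℓ^β)`: the convex cone in `X_ℝ` generated by `{γ − β : γ ∈ Σ_ℓ}`. -/
def coneC {g : ℕ} {Y : Submodule ℤ (Fin g → ℤ)}
    (φ : ((Fin g → ℤ) →ₗ[ℤ] ℤ) → Y) (ℓ : ℕ) (β : Fin g → ℤ) : Set (Fin g → ℝ) :=
  conicHull {w | ∃ γ ∈ SigmaL φ ℓ, w = iota (γ - β)}


section Aux

variable {g : ℕ} {Y : Submodule ℤ (Fin g → ℤ)}

lemma expand_int (u : (Fin g → ℤ) →ₗ[ℤ] ℤ) (a : Fin g → ℤ) :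
    u a = ∑ i, a i * u (Pi.single i 1) := by
  have h : a = ∑ i, a i • Pi.single i 1 := by
    funext j; simp [Finset.sum_apply, Pi.single_apply]
  conv_lhs => rw [h, map_sum]
  refine Finset.sum_congr rfl fun i _ => ?_
  rw [map_smul, smul_eq_mul]

lemma expand_real (z : (Fin g → ℝ) →ₗ[ℝ] ℝ) (a : Fin g → ℤ) :
    z (iota a) = ∑ i, (a i : ℝ) * z (Pi.single i 1) := by
  have h : iota a = ∑ i, (a i : ℝ) • (Pi.single i (1:ℝ) : Fin g → ℝ) := by
    funext j; simp [iota, Finset.sum_apply, Pi.single_apply]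
  conv_lhs => rw [h, map_sum]
  refine Finset.sum_congr rfl fun i _ => ?_
  rw [map_smul, smul_eq_mul]

lemma int_bound (qw qv t A l : ℤ) (hqw0 : 0 ≤ qw) (hqv0 : 0 ≤ qv)
    (hcs : (A*t)^2 ≤ qw*qv) (hA1 : 1 ≤ A) (hl1 : 1 ≤ l) : -qv ≤ l*qw + t := by
  have hstep1 : -(qw + qv) ≤ A * t := by
    by_contra hctr
    push_neg at hctr
    have h2 : (qw+qv) < -(A*t) := by linarith
    have hS : 0 ≤ qw + qv := by linarith
    have h3 : (qw+qv)^2 < (A*t)^2 := by nlinarith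
    have h1 : qw*qv ≤ (qw+qv)^2 := by nlinarith [sq_nonneg qw, sq_nonneg qv, mul_nonneg hqw0 hqv0]
    linarith
  rcases le_or_gt 0 (l*qw + t) with h | h
  · linarith
  · have hlA : (0:ℤ) ≤ l*A - 1 := by nlinarith
    have hint := mul_nonneg hlA hqw0
    have h3 : -qv ≤ A * (l*qw + t) := by nlinarith
    have hint2 := mul_nonneg (by linarith : (0:ℤ) ≤ A - 1) (by linarith : (0:ℤ) ≤ -(l*qw + t))
    have h4 : A * (l*qw + t) ≤ l*qw + t := by nlinarith
    linarith

lemma box_finite (R : Fin g → ℤ) : {x : Fin g → ℤ | ∀ i, |x i| ≤ R i}.Finite := by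
  have hsub : {x : Fin g → ℤ | ∀ i, |x i| ≤ R i}
      ⊆ Set.pi Set.univ (fun i => Set.Icc (-(R i)) (R i)) := by
    intro x hx i _
    simpa [abs_le] using hx i
  exact (Set.Finite.pi (fun i => Set.finite_Icc _ _)).subset hsub

variable (B : Y →ₗ[ℤ] (Fin g → ℤ) →ₗ[ℤ] ℤ)

lemma B_inj (hBpos : ∀ y : Y, y ≠ 0 → 0 < B y (y : Fin g → ℤ))
    (y y' : Y) (h : B y = B y') : y = y' := by
  by_contra hne
  have hsub : y - y' ≠ 0 := sub_ne_zero.mpr hne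
  have hpos := hBpos _ hsub
  rw [map_sub, h, sub_self] at hpos
  simp at hpos

variable {N : ℕ} (hNpos : 0 < N) (φ : ((Fin g → ℤ) →ₗ[ℤ] ℤ) → Y)
  (hφ : ∀ u : (Fin g → ℤ) →ₗ[ℤ] ℤ, B (φ u) = (N : ℤ) • u)
  (hBpos : ∀ y : Y, y ≠ 0 → 0 < B y (y : Fin g → ℤ))
  (hBsymm : ∀ y z : Y, B y (z : Fin g → ℤ) = B z (y : Fin g → ℤ))

include hNpos hφ hBpos hBsymm
set_option linter.unusedSectionVars false

lemma phi_comb (m n : ℤ) (u v : (Fin g → ℤ) →ₗ[ℤ] ℤ) :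
    ((φ (m • u + n • v) : Y) : Fin g → ℤ)
      = m • ((φ u : Y) : Fin g → ℤ) + n • ((φ v : Y) : Fin g → ℤ) := by
  have h : φ (m • u + n • v) = m • φ u + n • φ v := by
    refine B_inj B hBpos _ _ ?_
    refine LinearMap.ext fun x => ?_
    simp only [hφ, map_add, map_smul, LinearMap.add_apply, LinearMap.smul_apply,
      smul_eq_mul, map_smul]
    ring
  rw [h]
  push_cast
  rfl

lemma b_symm (u v : (Fin g → ℤ) →ₗ[ℤ] ℤ) :
    u ((φ v : Y) : Fin g → ℤ) = v ((φ u : Y) : Fin g → ℤ) := by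
  have h1 : B (φ u) ((φ v : Y) : Fin g → ℤ) = (N : ℤ) * u ((φ v : Y) : Fin g → ℤ) := by
    rw [hφ]; simp
  have h2 : B (φ v) ((φ u : Y) : Fin g → ℤ) = (N : ℤ) * v ((φ u : Y) : Fin g → ℤ) := by
    rw [hφ]; simp
  have h3 := hBsymm (φ u) (φ v)
  have hN : ((N:ℤ)) ≠ 0 := by exact_mod_cast hNpos.ne'
  have := h1.symm.trans (h3.trans h2)
  exact mul_left_cancel₀ hN this

lemma q_comb (m n : ℤ) (u v : (Fin g → ℤ) →ₗ[ℤ] ℤ) :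
    (m • u + n • v) ((φ (m • u + n • v) : Y) : Fin g → ℤ)
      = m^2 * (u ((φ u : Y) : Fin g → ℤ)) + 2*m*n * (u ((φ v : Y) : Fin g → ℤ))
        + n^2 * (v ((φ v : Y) : Fin g → ℤ)) := by
  rw [phi_comb B hNpos φ hφ hBpos hBsymm m n u v]
  have hs := b_symm B hNpos φ hφ hBpos hBsymm u v
  simp only [map_add, map_smul, LinearMap.add_apply, LinearMap.smul_apply, smul_eq_mul]
  rw [← hs]
  ring

lemma q_nonneg (u : (Fin g → ℤ) →ₗ[ℤ] ℤ) : 0 ≤ u ((φ u : Y) : Fin g → ℤ) := by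
  by_cases h : φ u = 0
  · rw [h]; simp
  · have hpos := hBpos _ h
    rw [hφ] at hpos
    simp only [LinearMap.smul_apply, smul_eq_mul] at hpos
    nlinarith [hpos, (by exact_mod_cast hNpos : (0:ℤ) < N)]

lemma CS (u v : (Fin g → ℤ) →ₗ[ℤ] ℤ) :
    (u ((φ v : Y) : Fin g → ℤ))^2
      ≤ (u ((φ u : Y) : Fin g → ℤ)) * (v ((φ v : Y) : Fin g → ℤ)) := by
  set qu := u ((φ u : Y) : Fin g → ℤ) with hqu
  set qv := v ((φ v : Y) : Fin g → ℤ) with hqv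
  set bb := u ((φ v : Y) : Fin g → ℤ) with hbb
  have hqu0 : 0 ≤ qu := q_nonneg B hNpos φ hφ hBpos hBsymm u
  have hqv0 : 0 ≤ qv := q_nonneg B hNpos φ hφ hBpos hBsymm v
  have hcomb := q_comb B hNpos φ hφ hBpos hBsymm qv (-bb) u v
  have hkey := q_nonneg B hNpos φ hφ hBpos hBsymm (qv • u + (-bb) • v)
  rw [hcomb] at hkey
  rcases eq_or_lt_of_le hqv0 with h0 | hpos
  · -- qv = 0, so v = 0 hence bb = 0? easier: use u,v swapped CS? do directly
    -- q v = 0 → φ v = 0 → bb = 0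
    have hv : φ v = 0 := by
      by_contra hne
      have hpos := hBpos _ hne
      rw [hφ] at hpos
      simp only [LinearMap.smul_apply, smul_eq_mul] at hpos
      have : (0:ℤ) < N := by exact_mod_cast hNpos
      nlinarith [hpos]
    have : bb = 0 := by rw [hbb, hv]; simp
    rw [this, ← h0]
    simp
  · nlinarith [hkey, hpos]

lemma phi_neg (u : (Fin g → ℤ) →ₗ[ℤ] ℤ) :
    ((φ (-u) : Y) : Fin g → ℤ) = -((φ u : Y) : Fin g → ℤ) := by
  have h := phi_comb B hNpos φ hφ hBpos hBsymm (-1) 0 u u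
  simpa using h

lemma phi_B (y : Y) :
    ((φ (B y) : Y) : Fin g → ℤ) = (N : ℤ) • (y : Fin g → ℤ) := by
  have h : φ (B y) = (N : ℤ) • y := by
    refine B_inj B hBpos _ _ ?_
    rw [hφ, map_smul]
  rw [h]; rfl


lemma decomp (hYfin : Y.toAddSubgroup.index ≠ 0) (ℓ : ℕ) (hℓ : 0 < ℓ) (x : Fin g → ℤ) :
    ∃ γ ∈ SigmaL φ ℓ, ∃ w, x = γ + (2*(ℓ:ℤ)) • ((φ w : Y) : Fin g → ℤ) := by
  set M₁ := Y.toAddSubgroup.index with hM₁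
  have hmem : (M₁:ℤ) • x ∈ Y := by
    have h := AddSubgroup.nsmul_index_mem Y.toAddSubgroup x
    rw [natCast_zsmul]
    exact h
  set yx : Y := ⟨(M₁:ℤ) • x, hmem⟩ with hyx
  set vx := B yx with hvx
  have hkey : ∀ u : (Fin g → ℤ) →ₗ[ℤ] ℤ,
      u ((φ vx : Y) : Fin g → ℤ) = ((N:ℤ)*(M₁:ℤ)) * (u x) := by
    intro u
    rw [hvx, phi_B B hNpos φ hφ hBpos hBsymm yx]
    have : ((yx : Fin g → ℤ)) = (M₁:ℤ) • x := rfl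
    rw [this, map_smul, map_smul]
    simp [smul_eq_mul]; ring
  set qv := vx ((φ vx : Y) : Fin g → ℤ) with hqv
  have hqv0 : 0 ≤ qv := q_nonneg B hNpos φ hφ hBpos hBsymm vx
  have hA1 : 1 ≤ (N:ℤ)*(M₁:ℤ) := by
    have h1 : 1 ≤ (N:ℤ) := by exact_mod_cast hNpos
    have h2 : 1 ≤ (M₁:ℤ) := by exact_mod_cast Nat.one_le_iff_ne_zero.mpr hYfin
    nlinarith
  have hl1 : 1 ≤ (ℓ:ℤ) := by exact_mod_cast hℓ
  have hbdd : ∀ w : (Fin g → ℤ) →ₗ[ℤ] ℤ,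
      -qv ≤ (ℓ:ℤ) * (w ((φ w : Y) : Fin g → ℤ)) + w x := by
    intro w
    set qw := w ((φ w : Y) : Fin g → ℤ) with hqw
    have hqw0 : 0 ≤ qw := q_nonneg B hNpos φ hφ hBpos hBsymm w
    have hcs : (w ((φ vx : Y) : Fin g → ℤ))^2 ≤ qw * qv := CS B hNpos φ hφ hBpos hBsymm w vx
    have hb := hkey w
    set A := (N:ℤ)*(M₁:ℤ) with hA
    rw [hb] at hcs
    exact int_bound qw qv (w x) A (ℓ:ℤ) hqw0 hqv0 hcs hA1 hl1
  obtain ⟨lb, ⟨w₀, hw₀⟩, hmin⟩ := Int.exists_least_of_bdd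
    (P := fun n => ∃ w : (Fin g → ℤ) →ₗ[ℤ] ℤ, (ℓ:ℤ) * (w ((φ w : Y) : Fin g → ℤ)) + w x = n)
    ⟨-qv, fun n hn => by obtain ⟨w, hw⟩ := hn; exact hw ▸ hbdd w⟩
    ⟨_, 0, rfl⟩
  have hminw : ∀ w : (Fin g → ℤ) →ₗ[ℤ] ℤ,
      (ℓ:ℤ) * (w₀ ((φ w₀ : Y) : Fin g → ℤ)) + w₀ x
        ≤ (ℓ:ℤ) * (w ((φ w : Y) : Fin g → ℤ)) + w x := by
    intro w
    rw [hw₀]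
    exact hmin _ ⟨w, rfl⟩
  refine ⟨x + (2*(ℓ:ℤ)) • ((φ w₀ : Y) : Fin g → ℤ), ?_, -w₀, ?_⟩
  · intro u
    have hq := hminw (w₀ + u)
    have hexp : (w₀+u) ((φ (w₀+u) : Y) : Fin g → ℤ)
        = w₀ ((φ w₀ : Y) : Fin g → ℤ) + 2*(u ((φ w₀ : Y) : Fin g → ℤ))
          + u ((φ u : Y) : Fin g → ℤ) := by
      have h := q_comb B hNpos φ hφ hBpos hBsymm 1 1 w₀ u
      have hs := b_symm B hNpos φ hφ hBpos hBsymm w₀ u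
      simp only [one_smul, one_pow, one_mul, mul_one] at h
      rw [h, hs]
    rw [hexp] at hq
    simp only [LinearMap.add_apply] at hq
    simp only [El, map_add, map_smul, smul_eq_mul]
    linarith
  · rw [phi_neg B hNpos φ hφ hBpos hBsymm w₀]
    simp [smul_neg]



lemma CS_real (u v : (Fin g → ℤ) →ₗ[ℤ] ℤ) :
    |((u ((φ v : Y) : Fin g → ℤ)):ℝ)|
      ≤ Real.sqrt ((u ((φ u : Y) : Fin g → ℤ)):ℝ) * Real.sqrt ((v ((φ v : Y) : Fin g → ℤ)):ℝ) := by
  have hcs := CS B hNpos φ hφ hBpos hBsymm u v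
  have h1 : (((u ((φ v : Y) : Fin g → ℤ)):ℝ))^2
      ≤ ((u ((φ u : Y) : Fin g → ℤ)):ℝ) * ((v ((φ v : Y) : Fin g → ℤ)):ℝ) := by
    exact_mod_cast hcs
  calc |((u ((φ v : Y) : Fin g → ℤ)):ℝ)|
      = Real.sqrt ((((u ((φ v : Y) : Fin g → ℤ)):ℝ))^2) := (Real.sqrt_sq_eq_abs _).symm
    _ ≤ Real.sqrt (((u ((φ u : Y) : Fin g → ℤ)):ℝ) * ((v ((φ v : Y) : Fin g → ℤ)):ℝ)) :=
        Real.sqrt_le_sqrt h1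
    _ = _ := Real.sqrt_mul (by exact_mod_cast q_nonneg B hNpos φ hφ hBpos hBsymm u) _

lemma sigma_abs (ℓ : ℕ) {γ : Fin g → ℤ} (hγ : γ ∈ SigmaL φ ℓ)
    (u : (Fin g → ℤ) →ₗ[ℤ] ℤ) : |u γ| ≤ (ℓ:ℤ) * (u ((φ u : Y) : Fin g → ℤ)) := by
  have h1 := hγ u
  have h2 := hγ (-u)
  have hneg : (-u) ((φ (-u) : Y) : Fin g → ℤ) = u ((φ u : Y) : Fin g → ℤ) := by
    rw [phi_neg B hNpos φ hφ hBpos hBsymm u]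
    simp
  simp only [El] at h1 h2
  rw [hneg] at h2
  simp only [LinearMap.neg_apply] at h2
  exact abs_le.mpr ⟨by linarith, by linarith⟩

end Aux

lemma iota_add {g : ℕ} (a b : Fin g → ℤ) : iota (a+b) = iota a + iota b := by
  funext j; simp [iota]

lemma iota_zsmul {g : ℕ} (n : ℤ) (a : Fin g → ℤ) : iota (n • a) = (n:ℝ) • iota a := by
  funext j; simp [iota]


/-- for every ℝ-linear functional `z` on `X_ℝ`, the function
`x ↦ D_ℓ(x) + z(x)` on `X` attains its minimum. -/
theorem statement17
    (g : ℕ) (hg : 1 ≤ g)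
    (Y : Submodule ℤ (Fin g → ℤ))
    (hYfin : Y.toAddSubgroup.index ≠ 0)
    (B : Y →ₗ[ℤ] (Fin g → ℤ) →ₗ[ℤ] ℤ)
    (hBsymm : ∀ y z : Y, B y (z : Fin g → ℤ) = B z (y : Fin g → ℤ))
    (hBpos : ∀ y : Y, y ≠ 0 → 0 < B y (y : Fin g → ℤ))
    (N : ℕ) (hN : N = (LinearMap.range B).toAddSubgroup.index) (hNpos : 0 < N)
    (φ : ((Fin g → ℤ) →ₗ[ℤ] ℤ) → Y)
    (hφ : ∀ u : (Fin g → ℤ) →ₗ[ℤ] ℤ, B (φ u) = (N : ℤ) • u)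
    (ℓ : ℕ) (hℓ : 0 < ℓ)
    (D : (Fin g → ℤ) → ℤ)
    (hD : ∀ γ ∈ SigmaL φ ℓ, ∀ z : (Fin g → ℤ) →ₗ[ℤ] ℤ,
      D (γ + (2 * (ℓ : ℤ)) • ((φ z : Fin g → ℤ))) = El φ ℓ z + z γ) :
    ∀ z : (Fin g → ℝ) →ₗ[ℝ] ℝ, ∃ a : Fin g → ℤ, ∀ x : Fin g → ℤ,
      (D a : ℝ) + z (iota a) ≤ (D x : ℝ) + z (iota x) := by
  intro z
  classical
  have hl1R : (1:ℝ) ≤ (ℓ:ℝ) := by exact_mod_cast hℓ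
  have hlposR : (0:ℝ) < (ℓ:ℝ) := by linarith
  obtain ⟨M₁, hM₁def⟩ : ∃ M₁ : ℕ, M₁ = Y.toAddSubgroup.index := ⟨_, rfl⟩
  have hM₁pos : 0 < M₁ := hM₁def ▸ Nat.pos_of_ne_zero hYfin
  have hApos : (0:ℝ) < (N:ℝ)*(M₁:ℝ) := by
    have h1 : (0:ℝ) < (N:ℝ) := by exact_mod_cast hNpos
    have h2 : (0:ℝ) < (M₁:ℝ) := by exact_mod_cast hM₁pos
    positivity
  have hq0 : ∀ u : (Fin g → ℤ) →ₗ[ℤ] ℤ, 0 ≤ u ((φ u : Y) : Fin g → ℤ) :=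
    q_nonneg B hNpos φ hφ hBpos hBsymm
  have hq0R : ∀ u : (Fin g → ℤ) →ₗ[ℤ] ℤ, (0:ℝ) ≤ ((u ((φ u : Y) : Fin g → ℤ)):ℝ) :=
    fun u => by exact_mod_cast hq0 u
  have hCSr := CS_real B hNpos φ hφ hBpos hBsymm
  -- coordinate functionals
  obtain ⟨pr, hpr⟩ : ∃ pr : Fin g → ((Fin g → ℤ) →ₗ[ℤ] ℤ),
      ∀ i x, pr i x = x i := ⟨fun i => LinearMap.proj i, fun i x => rfl⟩
  obtain ⟨Pq, hPq⟩ : ∃ Pq : Fin g → ℤ,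
      ∀ i, Pq i = (pr i) ((φ (pr i) : Y) : Fin g → ℤ) := ⟨_, fun i => rfl⟩
  have hPq0 : ∀ i, (0:ℝ) ≤ ((Pq i : ℤ):ℝ) := fun i => by rw [hPq i]; exact hq0R (pr i)
  -- the dual vectors detecting coordinates
  have hmem : ∀ i : Fin g, (M₁:ℤ) • (Pi.single i 1 : Fin g → ℤ) ∈ Y := by
    intro i
    have h := AddSubgroup.nsmul_index_mem Y.toAddSubgroup (Pi.single i 1 : Fin g → ℤ)
    rw [natCast_zsmul, hM₁def]
    exact h
  obtain ⟨vE, hvE⟩ : ∃ vE : Fin g → ((Fin g → ℤ) →ₗ[ℤ] ℤ),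
      ∀ i, vE i = B ⟨(M₁:ℤ) • (Pi.single i 1 : Fin g → ℤ), hmem i⟩ := ⟨_, fun i => rfl⟩
  obtain ⟨QV, hQV⟩ : ∃ QV : Fin g → ℤ,
      ∀ i, QV i = (vE i) ((φ (vE i) : Y) : Fin g → ℤ) := ⟨_, fun i => rfl⟩
  have hQV0 : ∀ i, (0:ℝ) ≤ ((QV i : ℤ):ℝ) := fun i => by rw [hQV i]; exact hq0R (vE i)
  have hkey : ∀ (u : (Fin g → ℤ) →ₗ[ℤ] ℤ) (i : Fin g),
      u ((φ (vE i) : Y) : Fin g → ℤ) = ((N:ℤ)*(M₁:ℤ)) * u (Pi.single i 1) := by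
    intro u i
    rw [hvE i, phi_B B hNpos φ hφ hBpos hBsymm _]
    have hc : ((⟨(M₁:ℤ) • (Pi.single i 1 : Fin g → ℤ), hmem i⟩ : Y) : Fin g → ℤ)
        = (M₁:ℤ) • (Pi.single i 1 : Fin g → ℤ) := rfl
    rw [hc, map_smul, map_smul]
    simp only [smul_eq_mul]
    ring
  -- constants
  obtain ⟨Zc, hZc⟩ : ∃ Zc : Fin g → ℝ, ∀ i, Zc i = |z (Pi.single i 1)| := ⟨_, fun i => rfl⟩
  have hZc0 : ∀ i, 0 ≤ Zc i := fun i => (hZc i) ▸ abs_nonneg _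
  obtain ⟨K1, hK1⟩ : ∃ K1 : ℝ,
      K1 = ∑ i, (ℓ:ℝ)*((Pq i:ℤ):ℝ) * Real.sqrt ((QV i:ℤ):ℝ) / ((N:ℝ)*(M₁:ℝ)) := ⟨_, rfl⟩
  obtain ⟨K2, hK2⟩ : ∃ K2 : ℝ,
      K2 = 2*(ℓ:ℝ) * ∑ i, Zc i * Real.sqrt ((Pq i:ℤ):ℝ) := ⟨_, rfl⟩
  obtain ⟨K3, hK3⟩ : ∃ K3 : ℝ, K3 = ∑ i, Zc i * ((ℓ:ℝ)*((Pq i:ℤ):ℝ)) := ⟨_, rfl⟩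
  have hK10 : 0 ≤ K1 := by
    rw [hK1]
    refine Finset.sum_nonneg fun i _ => ?_
    have := hPq0 i
    have := Real.sqrt_nonneg ((QV i:ℤ):ℝ)
    positivity
  have hK20 : 0 ≤ K2 := by
    rw [hK2]
    have : 0 ≤ ∑ i, Zc i * Real.sqrt ((Pq i:ℤ):ℝ) :=
      Finset.sum_nonneg fun i _ => mul_nonneg (hZc0 i) (Real.sqrt_nonneg _)
    positivity
  have hK30 : 0 ≤ K3 := by
    rw [hK3]
    refine Finset.sum_nonneg fun i _ => mul_nonneg (hZc0 i) ?_
    have := hPq0 i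
    positivity
  obtain ⟨c, hc⟩ : ∃ c : ℝ, c = (D 0 : ℝ) + z (iota 0) := ⟨_, rfl⟩
  obtain ⟨K, hK⟩ : ∃ K : ℝ, K = K1 + K2 := ⟨_, rfl⟩
  obtain ⟨C, hC⟩ : ∃ C : ℝ, C = |c| + K3 := ⟨_, rfl⟩
  have hK0 : 0 ≤ K := by rw [hK]; linarith
  have hC0 : 0 ≤ C := by rw [hC]; have := abs_nonneg c; linarith
  obtain ⟨s0, hs0def⟩ : ∃ s0 : ℝ, s0 = (K + C)/(ℓ:ℝ) + 1 := ⟨_, rfl⟩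
  have hs01 : 1 ≤ s0 := by
    rw [hs0def]
    have : 0 ≤ (K + C)/(ℓ:ℝ) := div_nonneg (by linarith) (le_of_lt hlposR)
    linarith
  obtain ⟨R, hR⟩ : ∃ R : Fin g → ℤ,
      ∀ i, R i = ⌈(ℓ:ℝ)*((Pq i:ℤ):ℝ) + 2*(ℓ:ℝ)*Real.sqrt ((Pq i:ℤ):ℝ) * s0⌉ := ⟨_, fun i => rfl⟩
  -- the key coercivity bound
  have hbox : ∀ x : Fin g → ℤ, (D x:ℝ) + z (iota x) ≤ c → ∀ i, |x i| ≤ R i := by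
    intro x hx i
    obtain ⟨γ, hγ, w, hxw⟩ := decomp B hNpos φ hφ hBpos hBsymm hYfin ℓ hℓ x
    have hDx : D x = (ℓ:ℤ) * (w ((φ w : Y) : Fin g → ℤ)) + w γ := by
      rw [hxw, hD γ hγ w]; rfl
    obtain ⟨qw, hqwdef⟩ : ∃ qw : ℤ, qw = w ((φ w : Y) : Fin g → ℤ) := ⟨_, rfl⟩
    have hqw0 : (0:ℝ) ≤ (qw:ℝ) := by rw [hqwdef]; exact hq0R w
    obtain ⟨s, hsdef⟩ : ∃ s : ℝ, s = Real.sqrt (qw:ℝ) := ⟨_, rfl⟩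
    have hs0' : 0 ≤ s := hsdef ▸ Real.sqrt_nonneg _
    have hs2 : s^2 = (qw:ℝ) := by rw [hsdef]; exact Real.sq_sqrt hqw0
    -- coordinate bounds on γ
    have hγi : ∀ j, |(γ j : ℤ)| ≤ ℓ * Pq j := by
      intro j
      have h := sigma_abs B hNpos φ hφ hBpos hBsymm ℓ hγ (pr j)
      rw [hpr j γ] at h
      rw [hPq j]
      exact h
    have hγiR : ∀ j, |((γ j : ℤ):ℝ)| ≤ (ℓ:ℝ)*((Pq j:ℤ):ℝ) := by
      intro j
      have := hγi j
      have h2 : ((|γ j| : ℤ):ℝ) ≤ (((ℓ:ℤ) * Pq j : ℤ):ℝ) := by exact_mod_cast this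
      rw [Int.cast_abs] at h2
      push_cast at h2
      exact h2
    -- bound on coordinates of φ w
    have hφwi : ∀ j, |((((φ w : Y) : Fin g → ℤ) j : ℤ):ℝ)| ≤ Real.sqrt ((Pq j:ℤ):ℝ) * s := by
      intro j
      have h := hCSr (pr j) w
      rw [hpr j] at h
      rw [hsdef, hqwdef, hPq j]
      exact h
    -- bound on w applied to basis vectors
    have hwi : ∀ j, |((w (Pi.single j 1) : ℤ):ℝ)|
        ≤ Real.sqrt ((QV j:ℤ):ℝ) * s / ((N:ℝ)*(M₁:ℝ)) := by
      intro j
      have h := hCSr w (vE j)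
      rw [hkey w j] at h
      have hpush : |(((((N:ℤ)*(M₁:ℤ)) * w (Pi.single j 1)) : ℤ):ℝ)|
          = ((N:ℝ)*(M₁:ℝ)) * |((w (Pi.single j 1) : ℤ):ℝ)| := by
        push_cast
        rw [abs_mul, abs_of_pos hApos]
      rw [hpush] at h
      rw [le_div_iff₀ hApos]
      calc |((w (Pi.single j 1) : ℤ):ℝ)| * ((N:ℝ)*(M₁:ℝ))
          = ((N:ℝ)*(M₁:ℝ)) * |((w (Pi.single j 1) : ℤ):ℝ)| := by ring
        _ ≤ Real.sqrt ((w ((φ w : Y) : Fin g → ℤ)):ℝ) * Real.sqrt (((vE j) ((φ (vE j) : Y) : Fin g → ℤ)):ℝ) := h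
        _ = Real.sqrt ((QV j:ℤ):ℝ) * s := by rw [hsdef, hqwdef, hQV j, mul_comm]
    -- bound |w γ| ≤ K1 * s
    have hwγ : |((w γ : ℤ):ℝ)| ≤ K1 * s := by
      have he : ((w γ : ℤ):ℝ) = ∑ j, ((γ j:ℤ):ℝ) * ((w (Pi.single j 1):ℤ):ℝ) := by
        exact_mod_cast congrArg (fun t : ℤ => (t:ℝ)) (expand_int w γ)
      rw [he]
      calc |∑ j, ((γ j:ℤ):ℝ) * ((w (Pi.single j 1):ℤ):ℝ)|
          ≤ ∑ j, |((γ j:ℤ):ℝ) * ((w (Pi.single j 1):ℤ):ℝ)| := Finset.abs_sum_le_sum_abs _ _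
        _ ≤ ∑ j, ((ℓ:ℝ)*((Pq j:ℤ):ℝ)) * (Real.sqrt ((QV j:ℤ):ℝ) * s / ((N:ℝ)*(M₁:ℝ))) := by
            refine Finset.sum_le_sum fun j _ => ?_
            rw [abs_mul]
            exact mul_le_mul (hγiR j) (hwi j) (abs_nonneg _)
              (by have := hPq0 j; positivity)
        _ = K1 * s := by
            rw [hK1, Finset.sum_mul]
            refine Finset.sum_congr rfl fun j _ => ?_
            ring
    -- bound |z (iota γ)| ≤ K3
    have hzγ : |z (iota γ)| ≤ K3 := by
      rw [expand_real z γ]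
      calc |∑ j, ((γ j:ℤ):ℝ) * z (Pi.single j 1)|
          ≤ ∑ j, |((γ j:ℤ):ℝ) * z (Pi.single j 1)| := Finset.abs_sum_le_sum_abs _ _
        _ ≤ ∑ j, Zc j * ((ℓ:ℝ)*((Pq j:ℤ):ℝ)) := by
            refine Finset.sum_le_sum fun j _ => ?_
            rw [abs_mul, mul_comm]
            exact mul_le_mul (le_of_eq (hZc j).symm) (hγiR j) (abs_nonneg _) (hZc0 j)
        _ = K3 := hK3.symm
    -- bound |z (iota (φ w))| ≤ (∑ Zc √Pq) * s
    have hzφw : |z (iota ((φ w : Y) : Fin g → ℤ))|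
        ≤ (∑ j, Zc j * Real.sqrt ((Pq j:ℤ):ℝ)) * s := by
      rw [expand_real z _]
      calc |∑ j, ((((φ w : Y) : Fin g → ℤ) j : ℤ):ℝ) * z (Pi.single j 1)|
          ≤ ∑ j, |((((φ w : Y) : Fin g → ℤ) j : ℤ):ℝ) * z (Pi.single j 1)| :=
            Finset.abs_sum_le_sum_abs _ _
        _ ≤ ∑ j, (Real.sqrt ((Pq j:ℤ):ℝ) * s) * Zc j := by
            refine Finset.sum_le_sum fun j _ => ?_
            rw [abs_mul]
            exact mul_le_mul (hφwi j) (le_of_eq (hZc j).symm) (abs_nonneg _)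
              (by have := Real.sqrt_nonneg ((Pq j:ℤ):ℝ); positivity)
        _ = (∑ j, Zc j * Real.sqrt ((Pq j:ℤ):ℝ)) * s := by
            rw [Finset.sum_mul]
            refine Finset.sum_congr rfl fun j _ => ?_
            ring
    -- assemble
    have hiota : z (iota x) = z (iota γ) + (2*(ℓ:ℝ)) * z (iota ((φ w : Y) : Fin g → ℤ)) := by
      rw [hxw, iota_add, iota_zsmul, map_add, map_smul, smul_eq_mul]
      push_cast
      ring
    have hDxR : (D x : ℝ) = (ℓ:ℝ)*(qw:ℝ) + ((w γ : ℤ):ℝ) := by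
      rw [hDx, hqwdef]
      push_cast
      ring
    have hmain : (ℓ:ℝ)*(qw:ℝ) + ((w γ : ℤ):ℝ) + z (iota γ)
        + (2*(ℓ:ℝ)) * z (iota ((φ w : Y) : Fin g → ℤ)) ≤ c := by
      rw [← hDxR]
      rw [hiota] at hx
      linarith
    have h2l : |(2*(ℓ:ℝ)) * z (iota ((φ w : Y) : Fin g → ℤ))| ≤ K2 * s := by
      have h := mul_le_mul_of_nonneg_left hzφw (by linarith : (0:ℝ) ≤ 2*(ℓ:ℝ))
      calc |(2*(ℓ:ℝ)) * z (iota ((φ w : Y) : Fin g → ℤ))|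
          = (2*(ℓ:ℝ)) * |z (iota ((φ w : Y) : Fin g → ℤ))| := by
            rw [abs_mul, abs_of_pos (by linarith : (0:ℝ) < 2*(ℓ:ℝ))]
        _ ≤ (2*(ℓ:ℝ)) * ((∑ j, Zc j * Real.sqrt ((Pq j:ℤ):ℝ)) * s) := h
        _ = K2 * s := by rw [hK2]; ring
    have hql : (ℓ:ℝ) * s^2 ≤ K*s + C := by
      rw [hs2, hK, hC]
      have e1 : -(K1*s) ≤ ((w γ : ℤ):ℝ) := neg_le_of_abs_le hwγ
      have e2 : -K3 ≤ z (iota γ) := neg_le_of_abs_le hzγ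
      have e3 : -(K2*s) ≤ (2*(ℓ:ℝ)) * z (iota ((φ w : Y) : Fin g → ℤ)) := neg_le_of_abs_le h2l
      have e4 : c ≤ |c| := le_abs_self c
      have e5 : (K1+K2)*s = K1*s + K2*s := by ring
      linarith
    have hsle : s ≤ s0 := by
      by_contra hctr
      push_neg at hctr
      have h1 : 1 ≤ s := by linarith
      have h2 : (ℓ:ℝ)*s*s ≤ (K+C)*s := by
        have hCs : C*1 ≤ C*s := mul_le_mul_of_nonneg_left h1 hC0
        have e : (K+C)*s = K*s + C*s := by ring
        have e2 : (ℓ:ℝ)*s*s = (ℓ:ℝ)*s^2 := by ring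
        linarith
      have h3 : (ℓ:ℝ)*s ≤ K+C := le_of_mul_le_mul_right h2 (by linarith)
      have h4 : s ≤ (K+C)/(ℓ:ℝ) := by
        rw [le_div_iff₀ hlposR, mul_comm]
        exact h3
      rw [hs0def] at hctr
      linarith
    -- conclude the coordinate bound
    have hxi : ((x i : ℤ):ℝ) = ((γ i : ℤ):ℝ) + 2*(ℓ:ℝ)*((((φ w : Y) : Fin g → ℤ) i : ℤ):ℝ) := by
      have : x i = γ i + (2*(ℓ:ℤ)) * (((φ w : Y) : Fin g → ℤ) i) := by
        rw [hxw]
        simp [Pi.add_apply, Pi.smul_apply, smul_eq_mul]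
      rw [this]
      push_cast
      ring
    have habs : |((x i : ℤ):ℝ)| ≤ (ℓ:ℝ)*((Pq i:ℤ):ℝ) + 2*(ℓ:ℝ)*Real.sqrt ((Pq i:ℤ):ℝ) * s0 := by
      rw [hxi]
      calc |((γ i : ℤ):ℝ) + 2*(ℓ:ℝ)*((((φ w : Y) : Fin g → ℤ) i : ℤ):ℝ)|
          ≤ |((γ i : ℤ):ℝ)| + |2*(ℓ:ℝ)*((((φ w : Y) : Fin g → ℤ) i : ℤ):ℝ)| := abs_add_le _ _
        _ ≤ (ℓ:ℝ)*((Pq i:ℤ):ℝ) + 2*(ℓ:ℝ)*(Real.sqrt ((Pq i:ℤ):ℝ) * s0) := by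
            have ha := hγiR i
            have hb : |2*(ℓ:ℝ)*((((φ w : Y) : Fin g → ℤ) i : ℤ):ℝ)|
                ≤ 2*(ℓ:ℝ)*(Real.sqrt ((Pq i:ℤ):ℝ) * s0) := by
              rw [abs_mul, abs_of_pos (by linarith : (0:ℝ) < 2*(ℓ:ℝ))]
              refine mul_le_mul_of_nonneg_left ?_ (by linarith)
              calc |((((φ w : Y) : Fin g → ℤ) i : ℤ):ℝ)|
                  ≤ Real.sqrt ((Pq i:ℤ):ℝ) * s := hφwi i
                _ ≤ Real.sqrt ((Pq i:ℤ):ℝ) * s0 :=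
                    mul_le_mul_of_nonneg_left hsle (Real.sqrt_nonneg _)
            linarith
        _ = (ℓ:ℝ)*((Pq i:ℤ):ℝ) + 2*(ℓ:ℝ)*Real.sqrt ((Pq i:ℤ):ℝ) * s0 := by ring
    have hRi : ((|x i| : ℤ):ℝ) ≤ ((R i : ℤ):ℝ) := by
      rw [Int.cast_abs, hR i]
      calc |((x i : ℤ):ℝ)| ≤ (ℓ:ℝ)*((Pq i:ℤ):ℝ) + 2*(ℓ:ℝ)*Real.sqrt ((Pq i:ℤ):ℝ) * s0 := habs
        _ ≤ _ := Int.le_ceil _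
    exact_mod_cast hRi
  -- finish: the sublevel set is finite
  have hfin : {x : Fin g → ℤ | (D x:ℝ) + z (iota x) ≤ c}.Finite :=
    (box_finite R).subset (fun x hx i => hbox x hx i)
  have h0mem : (0 : Fin g → ℤ) ∈ {x : Fin g → ℤ | (D x:ℝ) + z (iota x) ≤ c} := by
    exact le_of_eq hc.symm
  obtain ⟨a, haS, hamin⟩ := Set.exists_min_image _ (fun x : Fin g → ℤ => (D x:ℝ) + z (iota x))
    hfin ⟨0, h0mem⟩
  refine ⟨a, fun x => ?_⟩
  by_cases hx : (D x:ℝ) + z (iota x) ≤ c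
  · exact hamin x hx
  · push_neg at hx
    have := hamin 0 h0mem
    rw [← hc] at this
    linarith


end NFC
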